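/- Let S ∈ sp(n,ℂ) with Re Q_S ≥ 0. Then Re Q_{S_r} ≥ 0 (i.e. Re σ(z̄, S_r z) ≥ 0 for all z ∈ ℂ^{2n}) if and only if the complex conjugate of S(V_r) is contained in V_r. -/
import Mathlib


open MeasureTheory Complex Matrix

noncomputable section

/-- Index type for `2n`-dimensional (symplectic) vectors: `X`-coordinates `inl j`,
`Y`-coordinates `inr j`. -/
abbrev Idx (n : ℕ) := Fin n ⊕ Fin n

/-- The standard symplectic matrix `J = [[0, I],[-I, 0]]` over `ℂ`. -/
def Jmat (n : ℕ) : Matrix (Idx n) (Idx n) ℂ := Matrix.fromBlocks 0 1 (-1) 0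

/-- The standard symplectic matrix `J = [[0, I],[-I, 0]]` over `ℝ`. -/
def JmatR (n : ℕ) : Matrix (Idx n) (Idx n) ℝ := Matrix.fromBlocks 0 1 (-1) 0

/-- The standard symplectic form `σ(z,w) = ᵗz J w` on `ℂ^{2n}`. -/
def sigmaC (n : ℕ) (z w : Idx n → ℂ) : ℂ := z ⬝ᵥ (Jmat n).mulVec w

/-- The standard symplectic form on `ℝ^{2n}`. -/
def sigmaR (n : ℕ) (v w : Idx n → ℝ) : ℝ := v ⬝ᵥ (JmatR n).mulVec w

/-- Inclusion of real vectors into `ℂ^{2n}`. -/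
def realVec (n : ℕ) (v : Idx n → ℝ) : Idx n → ℂ := fun i => (v i : ℂ)

/-- Complex conjugation on `ℂ^{2n}` relative to the real form `ℝ^{2n}`. -/
def conjVec (n : ℕ) (z : Idx n → ℂ) : Idx n → ℂ := fun i => (starRingEnd ℂ) (z i)

/-- `S ∈ sp(n, ℂ)`, i.e. `σ(Sz, w) + σ(z, Sw) = 0` for all `z, w`. -/
def InSp (n : ℕ) (S : Matrix (Idx n) (Idx n) ℂ) : Prop := Sᵀ * Jmat n + Jmat n * S = 0

/-- `Re Q_S ≥ 0`: the real part of the quadratic form `Q_S(v) = σ(v, Sv)` is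
positive semi-definite on `ℝ^{2n}`. -/
def RePosQ (n : ℕ) (S : Matrix (Idx n) (Idx n) ℂ) : Prop :=
  ∀ v : Idx n → ℝ, 0 ≤ (sigmaC n (realVec n v) (S.mulVec (realVec n v))).re

/-- The generalized eigenspace `V_μ` of the matrix `S` for the eigenvalue `μ`. -/
def genEig (n : ℕ) (S : Matrix (Idx n) (Idx n) ℂ) (μ : ℂ) : Submodule ℂ (Idx n → ℂ) :=
  Module.End.maxGenEigenspace (Matrix.mulVecLin S) μ

/-- `V_r`: the sum of the generalized eigenspaces of `S` for real eigenvalues. -/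
def Vreal (n : ℕ) (S : Matrix (Idx n) (Idx n) ℂ) : Submodule ℂ (Idx n → ℂ) :=
  ⨆ lam : ℝ, genEig n S (lam : ℂ)

/-- `V_i`: the sum of the generalized eigenspaces of `S` for non-real eigenvalues. -/
def Vimag (n : ℕ) (S : Matrix (Idx n) (Idx n) ℂ) : Submodule ℂ (Idx n → ℂ) :=
  ⨆ μ : {z : ℂ // z.im ≠ 0}, genEig n S (μ : ℂ)

/-- `Sr` is the "real part" `S_r` of `S`: it agrees with `S` on `V_r` and vanishes on `V_i`. -/
def IsRealPart (n : ℕ) (S Sr : Matrix (Idx n) (Idx n) ℂ) : Prop :=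
  (∀ v ∈ Vreal n S, Sr.mulVec v = S.mulVec v) ∧ ∀ v ∈ Vimag n S, Sr.mulVec v = 0

/-- `Si` is the "imaginary part" `S_i` of `S`: it vanishes on `V_r` and agrees with `S`
on `V_i`. -/
def IsImagPart (n : ℕ) (S Si : Matrix (Idx n) (Idx n) ℂ) : Prop :=
  (∀ v ∈ Vreal n S, Si.mulVec v = 0) ∧ ∀ v ∈ Vimag n S, Si.mulVec v = S.mulVec v

/-- Condition (R): `V_λ ⊕ V_{−λ}` is invariant under complex conjugation for every
real `λ ≠ 0`. -/
def CondR (n : ℕ) (S : Matrix (Idx n) (Idx n) ℂ) : Prop :=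
  ∀ lam : ℝ, lam ≠ 0 →
    ∀ z ∈ genEig n S (lam : ℂ) ⊔ genEig n S (-(lam : ℂ)),
      conjVec n z ∈ genEig n S (lam : ℂ) ⊔ genEig n S (-(lam : ℂ))

/-- `ν = Σ_j ν_j`: the sum of the imaginary parts of the eigenvalues of `S` lying in the
upper half plane, counted with multiplicity. -/
def nuTotal (n : ℕ) (S : Matrix (Idx n) (Idx n) ℂ) : ℝ :=
  (S.charpoly.roots.map (fun z => max z.im 0)).sum

/-- `S_i ≠ 0`, i.e. `S` has at least one non-real eigenvalue. -/
def HasNonrealEig (n : ℕ) (S : Matrix (Idx n) (Idx n) ℂ) : Prop :=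
  ∃ z ∈ S.charpoly.roots, z.im ≠ 0

/-- Semisimple (= diagonalizable over `ℂ`) matrix. -/
def IsSemisimpleMat (n : ℕ) (D : Matrix (Idx n) (Idx n) ℂ) : Prop :=
  ∃ (P : Matrix (Idx n) (Idx n) ℂ) (d : Idx n → ℂ), IsUnit P ∧ D = P * Matrix.diagonal d * P⁻¹

/-- `S = D + N` is the Jordan decomposition of `S`: `D` semisimple, `N` nilpotent,
`DN = ND`. -/
def IsJordanDecomp (n : ℕ) (S D N : Matrix (Idx n) (Idx n) ℂ) : Prop :=
  S = D + N ∧ IsSemisimpleMat n D ∧ IsNilpotent N ∧ D * N = N * D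

namespace Statement5Aux

variable {n : ℕ}

lemma dp_transpose (A : Matrix (Idx n) (Idx n) ℂ) (x y : Idx n → ℂ) :
    (A.mulVec x) ⬝ᵥ y = x ⬝ᵥ (Aᵀ.mulVec y) := by
  rw [Matrix.dotProduct_mulVec, Matrix.vecMul_transpose]

lemma Jtrans : (Jmat n)ᵀ = -(Jmat n) := by
  simp [Jmat, Matrix.fromBlocks_transpose, Matrix.fromBlocks_neg]

lemma sigma_antisym (z w : Idx n → ℂ) : sigmaC n z w = - sigmaC n w z := by
  unfold sigmaC
  rw [dotProduct_comm, Matrix.dotProduct_mulVec, ← Matrix.mulVec_transpose,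
    Jtrans, Matrix.neg_mulVec, neg_dotProduct, neg_neg]

lemma sp_adj {S : Matrix (Idx n) (Idx n) ℂ} (hS : InSp n S) (z w : Idx n → ℂ) :
    sigmaC n (S.mulVec z) w = - sigmaC n z (S.mulVec w) := by
  have h0 : sigmaC n (S.mulVec z) w + sigmaC n z (S.mulVec w) = 0 := by
    unfold sigmaC
    rw [dp_transpose, Matrix.mulVec_mulVec, Matrix.mulVec_mulVec, ← dotProduct_add,
      ← Matrix.add_mulVec, hS]
    simp
  linear_combination h0

lemma Jconj (i j : Idx n) : (starRingEnd ℂ) (Jmat n i j) = Jmat n i j := by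
  rcases i with i | i <;> rcases j with j | j <;>
    simp [Jmat, Matrix.fromBlocks, Matrix.one_apply, apply_ite]

lemma sigma_conj (z w : Idx n → ℂ) :
    sigmaC n (conjVec n z) (conjVec n w) = (starRingEnd ℂ) (sigmaC n z w) := by
  simp only [sigmaC, conjVec, dotProduct, Matrix.mulVec, map_sum, _root_.map_mul]
  refine Finset.sum_congr rfl fun i _ => ?_
  congr 1
  simp only [map_sum, _root_.map_mul, Jconj]

lemma conjVec_conjVec (z : Idx n → ℂ) : conjVec n (conjVec n z) = z := by
  funext i; simp [conjVec]

lemma conjVec_add (z w : Idx n → ℂ) :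
    conjVec n (z + w) = conjVec n z + conjVec n w := by
  funext i; simp [conjVec]

lemma conjVec_smul (t : ℂ) (z : Idx n → ℂ) :
    conjVec n (t • z) = (starRingEnd ℂ) t • conjVec n z := by
  funext i; simp [conjVec]

lemma sigma_add_left (x y w : Idx n → ℂ) :
    sigmaC n (x + y) w = sigmaC n x w + sigmaC n y w := by
  simp [sigmaC, add_dotProduct]

lemma sigma_add_right (x y w : Idx n → ℂ) :
    sigmaC n w (x + y) = sigmaC n w x + sigmaC n w y := by
  simp [sigmaC, Matrix.mulVec_add, dotProduct_add]

lemma sigma_smul_left (t : ℂ) (x w : Idx n → ℂ) :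
    sigmaC n (t • x) w = t * sigmaC n x w := by
  simp [sigmaC, smul_dotProduct]

lemma sigma_smul_right (t : ℂ) (x w : Idx n → ℂ) :
    sigmaC n w (t • x) = t * sigmaC n w x := by
  simp [sigmaC, Matrix.mulVec_smul, dotProduct_smul]

lemma sigma_zero_left (w : Idx n → ℂ) : sigmaC n 0 w = 0 := by
  simp [sigmaC]

/-- positivity on real vectors extends to `Re σ(z̄, Sz) ≥ 0` for all complex `z`,
for `S ∈ sp`. -/
lemma repos_complex {S : Matrix (Idx n) (Idx n) ℂ} (hS : InSp n S) (hpos : RePosQ n S)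
    (z : Idx n → ℂ) : 0 ≤ (sigmaC n (conjVec n z) (S.mulVec z)).re := by
  set a : Idx n → ℂ := realVec n (fun i => (z i).re) with ha
  set b : Idx n → ℂ := realVec n (fun i => (z i).im) with hb
  have hz : z = a + Complex.I • b := by
    funext i
    simp only [ha, hb, realVec, Pi.add_apply, Pi.smul_apply, smul_eq_mul]
    rw [mul_comm, Complex.re_add_im]
  have hzc : conjVec n z = a + (-Complex.I) • b := by
    funext i
    simp only [conjVec, ha, hb, realVec, Pi.add_apply, Pi.smul_apply, smul_eq_mul]
    simp [Complex.ext_iff]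
  have hcross : sigmaC n a (S.mulVec b) = sigmaC n b (S.mulVec a) := by
    rw [sigma_antisym a, sp_adj hS]
    ring
  have key : sigmaC n (conjVec n z) (S.mulVec z)
      = sigmaC n a (S.mulVec a) + sigmaC n b (S.mulVec b) := by
    conv_lhs => rw [hzc, hz]
    rw [Matrix.mulVec_add, Matrix.mulVec_smul, sigma_add_left, sigma_add_right, sigma_add_right,
      sigma_smul_left, sigma_smul_left, sigma_smul_right, sigma_smul_right]
    linear_combination Complex.I * hcross - sigmaC n b (S.mulVec b) * Complex.I_sq
  have h1 := hpos (fun i => (z i).re)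
  have h2 := hpos (fun i => (z i).im)
  rw [← ha] at h1
  rw [← hb] at h2
  rw [key, Complex.add_re]
  exact add_nonneg h1 h2

/-- the key orthogonality lemma for generalized eigenvectors. -/
lemma pair_zero_aux {S : Matrix (Idx n) (Idx n) ℂ} (hS : InSp n S) {lam mu : ℂ}
    (h : lam + mu ≠ 0) (N : ℕ) :
    ∀ k m : ℕ, k + m ≤ N → ∀ u v : Idx n → ℂ,
      ((S.mulVecLin - lam • 1) ^ k) u = 0 → ((S.mulVecLin - mu • 1) ^ m) v = 0 →
      sigmaC n u v = 0 := by
  induction N with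
  | zero =>
    intro k m hkm u v hu hv
    obtain ⟨rfl, rfl⟩ : k = 0 ∧ m = 0 := by omega
    simp only [pow_zero, Module.End.one_apply] at hu
    rw [hu, sigma_zero_left]
  | succ N ih =>
    intro k m hkm u v hu hv
    rcases Nat.eq_zero_or_pos k with rfl | hk
    · simp only [pow_zero, Module.End.one_apply] at hu
      rw [hu, sigma_zero_left]
    rcases Nat.eq_zero_or_pos m with rfl | hm
    · simp only [pow_zero, Module.End.one_apply] at hv
      rw [hv, sigma_antisym, sigma_zero_left, neg_zero]
    obtain ⟨k', rfl⟩ : ∃ k', k = k' + 1 := ⟨k - 1, by omega⟩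
    obtain ⟨m', rfl⟩ : ∃ m', m = m' + 1 := ⟨m - 1, by omega⟩
    set u' : Idx n → ℂ := (S.mulVecLin - lam • 1) u with hu'
    set v' : Idx n → ℂ := (S.mulVecLin - mu • 1) v with hv'
    have hu'0 : ((S.mulVecLin - lam • 1) ^ k') u' = 0 := by
      rw [hu', ← Module.End.mul_apply, ← pow_succ]; exact hu
    have hv'0 : ((S.mulVecLin - mu • 1) ^ m') v' = 0 := by
      rw [hv', ← Module.End.mul_apply, ← pow_succ]; exact hv
    have h1 : sigmaC n u' v = 0 := ih k' (m' + 1) (by omega) u' v hu'0 hv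
    have h2 : sigmaC n u v' = 0 := ih (k' + 1) m' (by omega) u v' hu hv'0
    have hAu : S.mulVec u = u' + lam • u := by
      rw [hu']; simp [Matrix.mulVecLin_apply]
    have hAv : S.mulVec v = v' + mu • v := by
      rw [hv']; simp [Matrix.mulVecLin_apply]
    have key : sigmaC n (S.mulVec u) v = - sigmaC n u (S.mulVec v) := sp_adj hS u v
    rw [hAu, hAv, sigma_add_left, sigma_smul_left, sigma_add_right, sigma_smul_right,
      h1, h2] at key
    have : (lam + mu) * sigmaC n u v = 0 := by linear_combination key
    rcases mul_eq_zero.mp this with h' | h'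
    · exact absurd h' h
    · exact h'

lemma pair_zero {S : Matrix (Idx n) (Idx n) ℂ} (hS : InSp n S) {lam mu : ℂ}
    (h : lam + mu ≠ 0) {u v : Idx n → ℂ} (hu : u ∈ genEig n S lam) (hv : v ∈ genEig n S mu) :
    sigmaC n u v = 0 := by
  rw [genEig, Module.End.mem_maxGenEigenspace] at hu hv
  obtain ⟨k, hk⟩ := hu
  obtain ⟨m, hm⟩ := hv
  exact pair_zero_aux hS h (k + m) k m le_rfl u v hk hm

/-- `σ(·, v)` as a linear map. -/
def sigmaLeft (v : Idx n → ℂ) : (Idx n → ℂ) →ₗ[ℂ] ℂ where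
  toFun u := sigmaC n u v
  map_add' x y := sigma_add_left x y v
  map_smul' t x := sigma_smul_left t x v

/-- `σ(u, ·)` as a linear map. -/
def sigmaRight (u : Idx n → ℂ) : (Idx n → ℂ) →ₗ[ℂ] ℂ where
  toFun v := sigmaC n u v
  map_add' x y := sigma_add_right x y u
  map_smul' t x := sigma_smul_right t x u

lemma sigma_vr_vi {S : Matrix (Idx n) (Idx n) ℂ} (hS : InSp n S) {u v : Idx n → ℂ}
    (hu : u ∈ Vreal n S) (hv : v ∈ Vimag n S) : sigmaC n u v = 0 := by
  have step1 : ∀ μ : {z : ℂ // z.im ≠ 0}, ∀ w ∈ genEig n S (μ : ℂ), sigmaC n u w = 0 := by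
    intro μ w hw
    have : u ∈ LinearMap.ker (sigmaLeft w) := by
      refine (iSup_le (fun lam => ?_) : Vreal n S ≤ LinearMap.ker (sigmaLeft w)) hu
      intro x hx
      have hne : (lam : ℂ) + (μ : ℂ) ≠ 0 := by
        intro hc
        have := congrArg Complex.im hc
        simp at this
        exact μ.2 this
      exact pair_zero hS hne hx hw
    exact this
  have : v ∈ LinearMap.ker (sigmaRight u) := by
    refine (iSup_le (fun μ => ?_) : Vimag n S ≤ LinearMap.ker (sigmaRight u)) hv
    intro w hw
    exact step1 μ w hw
  exact this

lemma sigma_vi_vr {S : Matrix (Idx n) (Idx n) ℂ} (hS : InSp n S) {u v : Idx n → ℂ}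
    (hu : u ∈ Vimag n S) (hv : v ∈ Vreal n S) : sigmaC n u v = 0 := by
  rw [sigma_antisym, sigma_vr_vi hS hv hu, neg_zero]

lemma vsup_top (S : Matrix (Idx n) (Idx n) ℂ) : Vreal n S ⊔ Vimag n S = ⊤ := by
  rw [eq_top_iff, ← Module.End.iSup_maxGenEigenspace_eq_top (S.mulVecLin)]
  refine iSup_le fun μ => ?_
  by_cases hμ : μ.im = 0
  · refine le_trans ?_ le_sup_left
    have : μ = ((μ.re : ℝ) : ℂ) := by
      rw [Complex.ext_iff]; simp [hμ]
    rw [show (Module.End.maxGenEigenspace (S.mulVecLin) μ) = genEig n S μ from rfl, this]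
    exact le_iSup (fun lam : ℝ => genEig n S (lam : ℂ)) μ.re
  · refine le_trans ?_ le_sup_right
    exact le_iSup (fun ν : {z : ℂ // z.im ≠ 0} => genEig n S (ν : ℂ)) ⟨μ, hμ⟩

lemma decomp (S : Matrix (Idx n) (Idx n) ℂ) (z : Idx n → ℂ) :
    ∃ zr ∈ Vreal n S, ∃ zi ∈ Vimag n S, z = zr + zi := by
  have hz : z ∈ Vreal n S ⊔ Vimag n S := by rw [vsup_top]; trivial
  obtain ⟨zr, hzr, zi, hzi, hsum⟩ := Submodule.mem_sup.mp hz
  exact ⟨zr, hzr, zi, hzi, hsum.symm⟩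

lemma JJ : Jmat n * Jmat n = -1 := by
  simp only [Jmat, Matrix.fromBlocks_multiply]
  ext i j
  rcases i with i | i <;> rcases j with j | j <;>
    simp [Matrix.fromBlocks, Matrix.one_apply]

lemma nondeg {w : Idx n → ℂ} (h : ∀ u : Idx n → ℂ, sigmaC n u w = 0) : w = 0 := by
  have hJw : (Jmat n).mulVec w = 0 := by
    funext i
    have := h (Pi.single i 1)
    rwa [sigmaC, single_dotProduct, one_mul] at this
  have : (Jmat n).mulVec ((Jmat n).mulVec w) = -w := by
    rw [Matrix.mulVec_mulVec, JJ, Matrix.neg_mulVec, Matrix.one_mulVec]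
  rw [hJw, Matrix.mulVec_zero] at this
  exact neg_eq_zero.mp this.symm

end Statement5Aux

/-- if `Re Q_S ≥ 0`, then `Re Q_{S_r} ≥ 0` holds if and only if the complex
conjugate of `S(V_r)` is contained in `V_r`. -/
theorem statement5 (n : ℕ) (S Sr : Matrix (Idx n) (Idx n) ℂ)
    (hS : InSp n S) (hpos : RePosQ n S) (hSr : IsRealPart n S Sr) :
    (∀ z : Idx n → ℂ, 0 ≤ (sigmaC n (conjVec n z) (Sr.mulVec z)).re) ↔
      ∀ v ∈ Vreal n S, conjVec n (S.mulVec v) ∈ Vreal n S := by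
  obtain ⟨hSr1, hSr2⟩ := hSr
  constructor
  · intro hQ v hv
    have key : ∀ ζ ∈ Vimag n S, sigmaC n (conjVec n ζ) (S.mulVec v) = 0 := by
      intro ζ hζ
      by_contra hcne
      set c := sigmaC n (conjVec n ζ) (S.mulVec v) with hcdef
      set r := (sigmaC n (conjVec n v) (S.mulVec v)).re with hrdef
      set t : ℂ := (starRingEnd ℂ) ((-1 - (r : ℂ)) / c) with htdef
      have h0 := hQ (v + t • ζ)
      have hSrz : Sr.mulVec (v + t • ζ) = S.mulVec v := by
        rw [Matrix.mulVec_add, Matrix.mulVec_smul, hSr1 v hv, hSr2 ζ hζ, smul_zero, add_zero]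
      have hcz : conjVec n (v + t • ζ) = conjVec n v + (starRingEnd ℂ) t • conjVec n ζ := by
        rw [Statement5Aux.conjVec_add, Statement5Aux.conjVec_smul]
      rw [hSrz, hcz, Statement5Aux.sigma_add_left, Statement5Aux.sigma_smul_left] at h0
      have htc : (starRingEnd ℂ) t * c = -1 - (r : ℂ) := by
        rw [htdef, Complex.conj_conj, div_mul_cancel₀ _ hcne]
      rw [← hcdef, htc] at h0
      simp only [Complex.add_re, Complex.sub_re, Complex.neg_re, Complex.one_re,
        Complex.ofReal_re] at h0
      linarith
    have key2 : ∀ ζ ∈ Vimag n S, sigmaC n ζ (conjVec n (S.mulVec v)) = 0 := by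
      intro ζ hζ
      have h1 := Statement5Aux.sigma_conj ζ (conjVec n (S.mulVec v))
      rw [Statement5Aux.conjVec_conjVec] at h1
      rw [key ζ hζ] at h1
      exact (map_eq_zero (starRingEnd ℂ)).mp h1.symm
    obtain ⟨wr, hwr, wi, hwi, hw⟩ := Statement5Aux.decomp S (conjVec n (S.mulVec v))
    have hwi0 : wi = 0 := by
      apply Statement5Aux.nondeg
      intro u
      obtain ⟨ur, hur, ui, hui, rfl⟩ := Statement5Aux.decomp S u
      rw [Statement5Aux.sigma_add_left]
      have h1 : sigmaC n ur wi = 0 := Statement5Aux.sigma_vr_vi hS hur hwi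
      have h2 : sigmaC n ui wi = 0 := by
        have h3 := key2 ui hui
        rw [hw, Statement5Aux.sigma_add_right] at h3
        have h4 : sigmaC n ui wr = 0 := Statement5Aux.sigma_vi_vr hS hui hwr
        linear_combination h3 - h4
      rw [h1, h2, add_zero]
    rw [hw, hwi0, add_zero]
    exact hwr
  · intro hR z
    obtain ⟨zr, hzr, zi, hzi, rfl⟩ := Statement5Aux.decomp S z
    have hSrz : Sr.mulVec (zr + zi) = S.mulVec zr := by
      rw [Matrix.mulVec_add, hSr1 zr hzr, hSr2 zi hzi, add_zero]
    rw [hSrz, Statement5Aux.conjVec_add, Statement5Aux.sigma_add_left]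
    have h2 : sigmaC n (conjVec n zi) (S.mulVec zr) = 0 := by
      have h1 := Statement5Aux.sigma_conj zi (conjVec n (S.mulVec zr))
      rw [Statement5Aux.conjVec_conjVec] at h1
      have h3 : sigmaC n zi (conjVec n (S.mulVec zr)) = 0 :=
        Statement5Aux.sigma_vi_vr hS hzi (hR zr hzr)
      rw [h1, h3, map_zero]
    rw [h2, add_zero]
    exact Statement5Aux.repos_complex hS hpos zr
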